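/- arXiv:2504.15727 — 2 statements merged into one kernel-verified Lean document; each statement's English description precedes it below -/
import Mathlib

section
/- Let A be a nonempty proper subset of a set D, let a ∈ A, let ⊣ be the operation on D given by x ⊣ y = x if x ∈ A and x ⊣ y = a if x ∉ A, and let ⊢ be the dual operation x ⊢ y = y ⊣ x. Then (D,⊣,⊢) is an abelian dimonoid with empty halo (it has no bar-units), every bijection f : D → D with f(A) = A and f(a) = a is an automorphism of (D,⊣,⊢) and conversely; moreover, if |A| > 1 then (D,⊣,⊢) is not commutative. -/
/-- A dimonoid: two associative operations `ld` (⊣) and `rd` (⊢) satisfying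
axioms (D1), (D2), (D3). -/
def IsDimonoid {D : Type*} (ld rd : D → D → D) : Prop :=
  (∀ x y z, ld (ld x y) z = ld x (ld y z)) ∧
  (∀ x y z, rd (rd x y) z = rd x (rd y z)) ∧
  (∀ x y z, ld (ld x y) z = ld x (rd y z)) ∧
  (∀ x y z, ld (rd x y) z = rd x (ld y z)) ∧
  (∀ x y z, rd (ld x y) z = rd x (rd y z))

/-- The automorphism group of a magma `(D, op)`, as a subgroup of `Equiv.Perm D`. -/
def semigroupAutGroup {D : Type*} (op : D → D → D) : Subgroup (Equiv.Perm D) where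
  carrier := {f : Equiv.Perm D | ∀ x y, f (op x y) = op (f x) (f y)}
  one_mem' := fun _ _ => rfl
  mul_mem' := by
    intro f g hf hg
    simp only [Set.mem_setOf_eq] at hf hg ⊢
    intro x y
    simp [Equiv.Perm.mul_apply, hg, hf]
  inv_mem' := by
    intro f hf
    simp only [Set.mem_setOf_eq] at hf ⊢
    intro x y
    apply f.injective
    rw [hf]; simp

/-- The automorphism group of a dimonoid `(D, ld, rd)`. -/
def dimonoidAutGroup {D : Type*} (ld rd : D → D → D) : Subgroup (Equiv.Perm D) :=
  semigroupAutGroup ld ⊓ semigroupAutGroup rd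

/-- The dimonoid `LO_{A←D} ⋈ RO_{A←D}` is an abelian dimonoid with empty halo;
its automorphisms are exactly the bijections `f` with `f(A) = A` and `f(a) = a`;
and if `|A| > 1` it is not commutative. -/
theorem LO_A_D_dimonoid {D : Type*} (A : Set D) (hA : A.Nonempty) (hAp : A ≠ Set.univ)
    (a : D) (ha : a ∈ A) (ld rd : D → D → D)
    (hld1 : ∀ x y, x ∈ A → ld x y = x)
    (hld2 : ∀ x y, x ∉ A → ld x y = a)
    (hrd : ∀ x y, rd x y = ld y x) :
    IsDimonoid ld rd ∧
    (∀ x y, ld x y = rd y x) ∧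
    (¬ ∃ e : D, ∀ d, rd e d = d ∧ ld d e = d) ∧
    (∀ f : Equiv.Perm D,
      ((∀ x y, f (ld x y) = ld (f x) (f y)) ∧ (∀ x y, f (rd x y) = rd (f x) (f y))) ↔
      (⇑f '' A = A ∧ f a = a)) ∧
    (A.Nontrivial → ¬ ((∀ x y, ld x y = ld y x) ∧ (∀ x y, rd x y = rd y x))) := by
  have hmem : ∀ x y, ld x y ∈ A := by
    intro x y
    by_cases hx : x ∈ A
    · rw [hld1 x y hx]; exact hx
    · rw [hld2 x y hx]; exact ha
  have hfst : ∀ x y z, ld x y = ld x z := by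
    intro x y z
    by_cases hx : x ∈ A
    · rw [hld1 x y hx, hld1 x z hx]
    · rw [hld2 x y hx, hld2 x z hx]
  have hldld : ∀ x y z w, ld (ld x y) z = ld x w := by
    intro x y z w
    rw [hld1 _ z (hmem x y)]
    exact (hfst x y w)
  refine ⟨⟨?_, ?_, ?_, ?_, ?_⟩, ?_, ?_, ?_, ?_⟩
  · intro x y z; rw [hldld x y z (ld y z)]
  · intro x y z
    simp only [hrd]
    rw [hld1 _ x (hmem z y)]
    exact hfst z (ld y x) y
  · intro x y z
    rw [hldld x y z (rd y z)]
  · intro x y z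
    simp only [hrd]
    rw [hld1 _ x (hmem y z), hld1 _ z (hmem y x)]
    exact hfst y x z
  · intro x y z
    simp only [hrd]
    rw [hld1 _ x (hmem z y)]
    exact hfst z (ld x y) y
  · intro x y; rw [hrd]
  · rintro ⟨e, he⟩
    obtain ⟨d, hd⟩ : ∃ d, d ∉ A := by
      by_contra h
      push_neg at h
      exact hAp (Set.eq_univ_of_forall h)
    have := (he d).2
    rw [hld2 d e hd] at this
    exact hd (this ▸ ha)
  · intro f
    constructor
    · rintro ⟨hfl, -⟩
      have hAtoA : ∀ x ∈ A, f x ∈ A := by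
        intro x hx
        by_contra hfx
        have := hfl x x
        rw [hld1 x x hx, hld2 (f x) (f x) hfx] at this
        exact hfx (this ▸ ha)
      obtain ⟨d, hd⟩ : ∃ d, d ∉ A := by
        by_contra h
        push_neg at h
        exact hAp (Set.eq_univ_of_forall h)
      have hCtoC : ∀ x, x ∉ A → f x ∉ A := by
        intro x hx hfx
        have := hfl x x
        rw [hld2 x x hx, hld1 (f x) (f x) hfx] at this
        exact hx ((f.injective this) ▸ ha)
      have hfa : f a = a := by
        have := hfl d d
        rw [hld2 d d hd, hld2 (f d) (f d) (hCtoC d hd)] at this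
        exact this
      refine ⟨?_, hfa⟩
      apply Set.eq_of_subset_of_subset
      · rintro y ⟨x, hx, rfl⟩; exact hAtoA x hx
      · intro y hy
        obtain ⟨x, rfl⟩ := f.surjective y
        refine ⟨x, ?_, rfl⟩
        by_contra hx
        exact hCtoC x hx hy
    · rintro ⟨hfA, hfa⟩
      have hiff : ∀ x, x ∈ A ↔ f x ∈ A := by
        intro x
        constructor
        · intro hx; rw [← hfA]; exact ⟨x, hx, rfl⟩
        · intro hfx
          rw [← hfA] at hfx
          obtain ⟨x', hx', hxx⟩ := hfx
          rwa [← f.injective hxx]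
      have key : ∀ x y, f (ld x y) = ld (f x) (f y) := by
        intro x y
        by_cases hx : x ∈ A
        · rw [hld1 x y hx, hld1 (f x) (f y) ((hiff x).mp hx)]
        · rw [hld2 x y hx, hld2 (f x) (f y) (fun h => hx ((hiff x).mpr h)), hfa]
      exact ⟨key, fun x y => by rw [hrd, hrd, key]⟩
  · rintro ⟨b, hb, c, hc, hbc⟩ ⟨hlc, -⟩
    have := hlc b c
    rw [hld1 b c hb, hld1 c b hc] at this
    exact hbc this
end

section
/- Let A be a subset of a set D with 0 ∈ A ⊆ D. Define ⊣ on D by x ⊣ y = x if x ∈ A and x ⊣ y = 0 if x ∉ A, and let ⊢ be the null operation x ⊢ y = 0. Then (D,⊣,⊢) is a rectangular dimonoid (both ⊣ and ⊢ are rectangular semigroup operations and the dimonoid axioms hold); a bijection f : D → D is an automorphism of (D,⊣,⊢) if and only if f(A) = A and f(0) = 0 (so its automorphism group is isomorphic to S_{A∖{0}} × S_{D∖A}); if |D| > 2 the halo of (D,⊣,⊢) is empty; and if |A| > 1 then (D,⊣,⊢) is nonabelian and noncommutative. -/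
/-- The subgroup of permutations preserving `A` and fixing `z ∈ A` is isomorphic
to `Perm (A \ {z}) × Perm Aᶜ`. -/
lemma perm_stab_mulEquiv {D : Type*} (A : Set D) (z : D) (hz : z ∈ A)
    (G : Subgroup (Equiv.Perm D))
    (hG : ∀ f : Equiv.Perm D, f ∈ G ↔ (⇑f '' A = A ∧ f z = z)) :
    Nonempty (↥G ≃* Equiv.Perm ↥(A \ {z}) × Equiv.Perm ↥Aᶜ) := by
  classical
  -- membership characterization
  have hmemA : ∀ f : Equiv.Perm D, f ∈ G → ∀ x, x ∈ A ↔ f x ∈ A := by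
    intro f hf x
    obtain ⟨hA, -⟩ := (hG f).1 hf
    constructor
    · intro hx; rw [← hA]; exact ⟨x, hx, rfl⟩
    · intro hx
      rw [← hA] at hx
      obtain ⟨y, hy, hyx⟩ := hx
      rwa [← f.injective hyx]
  have hfz : ∀ f : Equiv.Perm D, f ∈ G → f z = z := fun f hf => ((hG f).1 hf).2
  have h1 : ∀ f : Equiv.Perm D, f ∈ G → ∀ x, x ∈ A \ {z} ↔ f x ∈ A \ {z} := by
    intro f hf x
    simp only [Set.mem_diff, Set.mem_singleton_iff]
    constructor
    · rintro ⟨hxA, hxz⟩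
      refine ⟨(hmemA f hf x).1 hxA, fun h => hxz ?_⟩
      exact f.injective (h.trans (hfz f hf).symm)
    · rintro ⟨hxA, hxz⟩
      refine ⟨(hmemA f hf x).2 hxA, fun h => hxz ?_⟩
      rw [h]; exact hfz f hf
  have h2 : ∀ f : Equiv.Perm D, f ∈ G → ∀ x, x ∈ Aᶜ ↔ f x ∈ Aᶜ := by
    intro f hf x
    simp only [Set.mem_compl_iff, not_iff_not]
    exact hmemA f hf x
  -- the forward monoid hom
  let Φ : ↥G →* Equiv.Perm ↥(A \ {z}) × Equiv.Perm ↥Aᶜ :=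
    { toFun := fun f => ((f : Equiv.Perm D).subtypePerm (fun x => (h1 f f.2 x).symm),
                         (f : Equiv.Perm D).subtypePerm (fun x => (h2 f f.2 x).symm))
      map_one' := by
        refine Prod.ext ?_ ?_ <;> · ext x; rfl
      map_mul' := by
        intro f g
        refine Prod.ext ?_ ?_ <;> · ext x; rfl }
  refine ⟨MulEquiv.ofBijective Φ ⟨?_, ?_⟩⟩
  · -- injective
    rw [injective_iff_map_eq_one]
    intro f hf
    have hf1 : ∀ x (hx : x ∈ A \ {z}), (f : Equiv.Perm D) x = x := by
      intro x hx
      have := congrArg (fun σ => (σ ⟨x, hx⟩ : D)) (congrArg Prod.fst hf)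
      simpa [Φ] using this
    have hf2 : ∀ x (hx : x ∈ Aᶜ), (f : Equiv.Perm D) x = x := by
      intro x hx
      have := congrArg (fun σ => (σ ⟨x, hx⟩ : D)) (congrArg Prod.snd hf)
      simpa [Φ] using this
    ext x
    by_cases hxA : x ∈ A
    · by_cases hxz : x = z
      · subst hxz; simpa using hfz f f.2
      · simpa using hf1 x ⟨hxA, hxz⟩
    · simpa using hf2 x hxA
  · -- surjective
    rintro ⟨σ, τ⟩
    let e1 : ↥(A \ {z}) ≃ {x : D // x ∈ A \ {z}} := Equiv.refl _
    let e2 : ↥Aᶜ ≃ {x : D // x ∈ Aᶜ} := Equiv.refl _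
    set f : Equiv.Perm D := σ.extendDomain e1 * τ.extendDomain e2 with hfdef
    have hσapp : ∀ x (hx : x ∈ A \ {z}), f x = (σ ⟨x, hx⟩ : D) := by
      intro x hx
      have hxc : x ∉ Aᶜ := fun h => h hx.1
      rw [hfdef, Equiv.Perm.mul_apply, Equiv.Perm.extendDomain_apply_not_subtype τ e2 hxc,
        Equiv.Perm.extendDomain_apply_subtype σ e1 hx]
      rfl
    have hτapp : ∀ x (hx : x ∈ Aᶜ), f x = (τ ⟨x, hx⟩ : D) := by
      intro x hx
      rw [hfdef, Equiv.Perm.mul_apply, Equiv.Perm.extendDomain_apply_subtype τ e2 hx]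
      have hc : ((e2 (τ (e2.symm ⟨x, hx⟩)) : {x : D // x ∈ Aᶜ}) : D) ∉ A \ {z} := by
        intro h
        exact (e2 (τ (e2.symm ⟨x, hx⟩))).2 h.1
      rw [Equiv.Perm.extendDomain_apply_not_subtype σ e1 hc]
      rfl
    have hfzz : f z = z := by
      have h1 : z ∉ A \ {z} := fun h => h.2 rfl
      have h2 : z ∉ Aᶜ := fun h => h hz
      rw [hfdef, Equiv.Perm.mul_apply, Equiv.Perm.extendDomain_apply_not_subtype τ e2 h2,
        Equiv.Perm.extendDomain_apply_not_subtype σ e1 h1]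
    have hiff : ∀ x, x ∈ A ↔ f x ∈ A := by
      intro x
      by_cases hxA : x ∈ A
      · by_cases hxz : x = z
        · subst hxz; rw [hfzz]
        · have hmem := (σ ⟨x, ⟨hxA, hxz⟩⟩).2.1
          rw [hσapp x ⟨hxA, hxz⟩]
          exact iff_of_true hxA hmem
      · have hmem := (τ ⟨x, hxA⟩).2
        simp only [Set.mem_compl_iff] at hmem
        rw [hτapp x hxA]
        exact iff_of_false hxA hmem
    have hfG : f ∈ G := by
      rw [hG]
      refine ⟨?_, hfzz⟩
      ext y
      constructor
      · rintro ⟨x, hx, rfl⟩; exact (hiff x).1 hx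
      · intro hy
        refine ⟨f⁻¹ y, ?_, f.apply_symm_apply y⟩
        rw [hiff (f⁻¹ y)]; simpa using hy
    refine ⟨⟨f, hfG⟩, ?_⟩
    refine Prod.ext ?_ ?_
    · ext x
      rcases x with ⟨x, hx⟩
      simp only [Φ, MonoidHom.coe_mk, OneHom.coe_mk, Equiv.Perm.subtypePerm_apply]
      exact hσapp x hx
    · ext x
      rcases x with ⟨x, hx⟩
      simp only [Φ, MonoidHom.coe_mk, OneHom.coe_mk, Equiv.Perm.subtypePerm_apply]
      exact hτapp x hx

/-- The dimonoid `LO_{A←D} ⋈ O_D` for `0 ∈ A ⊆ D`: with `x ⊣ y = x` if `x ∈ A`,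
`x ⊣ y = 0` if `x ∉ A`, and `x ⊢ y = 0`, one gets a rectangular dimonoid;
its automorphisms are exactly the bijections `f` with `f(A) = A` and `f(0) = 0`,
so its automorphism group is isomorphic to `S_{A∖{0}} × S_{D∖A}`; if `|D| > 2`
its halo is empty; and if `|A| > 1` it is nonabelian and noncommutative. -/
theorem LO_A_D_null_dimonoid {D : Type*} (A : Set D) (z : D) (hz : z ∈ A)
    (ld rd : D → D → D)
    (hld1 : ∀ x y, x ∈ A → ld x y = x)
    (hld2 : ∀ x y, x ∉ A → ld x y = z)
    (hrd : ∀ x y, rd x y = z) :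
    IsDimonoid ld rd ∧
    (∀ x y zz, ld (ld x y) zz = ld x zz) ∧
    (∀ x y zz, rd (rd x y) zz = rd x zz) ∧
    (∀ f : Equiv.Perm D,
      ((∀ x y, f (ld x y) = ld (f x) (f y)) ∧ (∀ x y, f (rd x y) = rd (f x) (f y))) ↔
      (⇑f '' A = A ∧ f z = z)) ∧
    Nonempty (↥(dimonoidAutGroup ld rd) ≃* Equiv.Perm ↥(A \ {z}) × Equiv.Perm ↥Aᶜ) ∧
    ((∃ x y zz : D, x ≠ y ∧ y ≠ zz ∧ x ≠ zz) →
      ¬ ∃ e : D, ∀ d, rd e d = d ∧ ld d e = d) ∧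
    (A.Nontrivial →
      (¬ ∀ x y, ld x y = rd y x) ∧
      ¬ ((∀ x y, ld x y = ld y x) ∧ (∀ x y, rd x y = rd y x))) := by
  classical
  -- ld x y doesn't depend on y, and its value is in A
  have hld : ∀ x y, ld x y = if x ∈ A then x else z := by
    intro x y
    by_cases hx : x ∈ A
    · rw [hld1 x y hx, if_pos hx]
    · rw [hld2 x y hx, if_neg hx]
  have hldA : ∀ x y, ld x y ∈ A := by
    intro x y
    rw [hld]
    by_cases hx : x ∈ A <;> simp [hx, hz]
  -- the automorphism characterization
  have hchar : ∀ f : Equiv.Perm D,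
      ((∀ x y, f (ld x y) = ld (f x) (f y)) ∧ (∀ x y, f (rd x y) = rd (f x) (f y))) ↔
      (⇑f '' A = A ∧ f z = z) := by
    intro f
    constructor
    · rintro ⟨hL, hR⟩
      have hfz : f z = z := by
        have := hR z z
        rwa [hrd, hrd] at this
      have hAto : ∀ x, x ∈ A → f x ∈ A := by
        intro x hx
        have := hL x x
        rw [hld1 x x hx] at this
        rw [this]
        exact hldA _ _
      have hAfrom : ∀ x, f x ∈ A → x ∈ A := by
        intro x hfx
        by_contra hx
        have h := hL x x
        rw [hld2 x x hx, hfz, hld1 _ _ hfx] at h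
        have hxz : x = z := f.injective (by rw [← h, hfz])
        exact hx (hxz ▸ hz)
      refine ⟨?_, hfz⟩
      ext y
      constructor
      · rintro ⟨x, hx, rfl⟩; exact hAto x hx
      · intro hy
        exact ⟨f⁻¹ y, hAfrom (f⁻¹ y) (by simpa using hy), f.apply_symm_apply y⟩
    · rintro ⟨hA, hfz⟩
      have hmem : ∀ x, x ∈ A ↔ f x ∈ A := by
        intro x
        constructor
        · intro hx; rw [← hA]; exact ⟨x, hx, rfl⟩
        · intro hx
          rw [← hA] at hx
          obtain ⟨y, hy, hyx⟩ := hx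
          rwa [← f.injective hyx]
      constructor
      · intro x y
        by_cases hx : x ∈ A
        · rw [hld1 x y hx, hld1 (f x) (f y) ((hmem x).1 hx)]
        · rw [hld2 x y hx, hld2 (f x) (f y) (fun h => hx ((hmem x).2 h)), hfz]
      · intro x y
        rw [hrd, hrd, hfz]
  refine ⟨⟨?_, ?_, ?_, ?_, ?_⟩, ?_, ?_, hchar, ?_, ?_, ?_⟩
  · intro x y w
    by_cases hx : x ∈ A <;> simp [hld, hx, hz]
  · intro x y w; simp [hrd]
  · intro x y w
    by_cases hx : x ∈ A <;> simp [hld, hx, hz]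
  · intro x y w
    simp [hld, hrd, hz]
  · intro x y w; simp [hrd]
  · intro x y w
    by_cases hx : x ∈ A <;> simp [hld, hx, hz]
  · intro x y w; simp [hrd]
  · exact perm_stab_mulEquiv A z hz _ (fun f => by
      constructor
      · intro hf
        exact (hchar f).1 ⟨hf.1, hf.2⟩
      · intro hf
        have := (hchar f).2 hf
        exact ⟨this.1, this.2⟩)
  · rintro ⟨x, y, zz, hxy, hyz, hxz⟩ ⟨e, he⟩
    have hx := (he x).1
    have hy := (he y).1
    rw [hrd] at hx hy
    exact hxy (hx.symm.trans hy)
  · intro hA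
    obtain ⟨a, haA, b, hbA, hab⟩ := hA
    have ha : ∃ c ∈ A, c ≠ z := by
      by_cases h : a = z
      · exact ⟨b, hbA, fun hb => hab (by rw [h, hb])⟩
      · exact ⟨a, haA, h⟩
    obtain ⟨c, hcA, hcz⟩ := ha
    constructor
    · intro h
      have := h c c
      rw [hld1 c c hcA, hrd] at this
      exact hcz this
    · rintro ⟨hLcomm, -⟩
      have := hLcomm c z
      rw [hld1 c z hcA, hld1 z c hz] at this
      exact hcz this
end
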